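/- arXiv:1905.11033 — 2 statements merged into one kernel-verified Lean document; each statement's English description precedes it below -/
import Mathlib

section
/- Let (X_1, X_2) be a bivariate centered Gaussian vector with unit variances and correlation ρ ∈ (−1,1). Then E[X_1 · 1_{X_1 ≤ 0, X_1 + X_2 ≥ 0}] = (φ(0)/2)(√((1+ρ)/2) − 1) and E[X_2 · 1_{X_1 ≤ 0, X_1 + X_2 ≥ 0}] = (φ(0)/2)(√((1+ρ)/2) − ρ). -/
open MeasureTheory ProbabilityTheory Real Set Filter

noncomputable def gg (x : ℝ) : ℝ := (Real.sqrt (2 * Real.pi))⁻¹ * Real.exp (-(x ^ 2) / 2)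

lemma gg_eq_pdf : gg = gaussianPDFReal 0 1 := by
  funext x
  simp [gg, gaussianPDFReal]

lemma gg_pos (x : ℝ) : 0 < gg x := by
  have h : (0:ℝ) < Real.sqrt (2 * Real.pi) := Real.sqrt_pos.2 (by positivity)
  unfold gg
  positivity

lemma gg_nonneg (x : ℝ) : 0 ≤ gg x := (gg_pos x).le

lemma gg_cont : Continuous gg := by
  unfold gg; fun_prop

lemma gg_even (x : ℝ) : gg (-x) = gg x := by simp [gg]

lemma gg_exp (x : ℝ) : gg x = (Real.sqrt (2 * Real.pi))⁻¹ * Real.exp (-(1/2) * x ^ 2) := by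
  rw [gg]; ring_nf

lemma hasDerivAt_gg (x : ℝ) : HasDerivAt gg (-x * gg x) x := by
  have h : HasDerivAt (fun x : ℝ => -(x ^ 2) / 2) (-x) x := by
    have := ((hasDerivAt_pow 2 x).neg).div_const 2
    convert! this using 1
    push_cast
    ring
  have := (h.exp).const_mul (Real.sqrt (2 * Real.pi))⁻¹
  convert! this using 1
  simp [gg]; ring

lemma integrable_gg : Integrable gg := by
  simp only [funext gg_exp]
  exact (integrable_exp_neg_mul_sq (by norm_num : (0:ℝ) < 1/2)).const_mul _

lemma integrable_id_mul_gg : Integrable (fun x : ℝ => x * gg x) := by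
  have : (fun x : ℝ => x * gg x)
      = fun x : ℝ => (Real.sqrt (2 * Real.pi))⁻¹ * (x * Real.exp (-(1/2) * x ^ 2)) := by
    funext x; rw [gg_exp]; ring
  rw [this]
  exact ((integrable_mul_exp_neg_mul_sq (by norm_num : (0:ℝ) < 1/2))).const_mul _

lemma integral_gg : ∫ x, gg x = 1 := by
  rw [gg_eq_pdf]
  exact integral_gaussianPDFReal_eq_one 0 one_ne_zero

lemma meas_ggNN : Measurable (fun x => (gg x).toNNReal) :=
  gg_cont.measurable.real_toNNReal

lemma gaussianReal_std :
    gaussianReal 0 1 = volume.withDensity (fun x => ((gg x).toNNReal : ENNReal)) := by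
  rw [gaussianReal_of_var_ne_zero 0 one_ne_zero]
  congr 1
  funext x
  rw [gaussianPDF, ← gg_eq_pdf, ENNReal.ofReal]

lemma setIntegral_gauss (f : ℝ → ℝ) {s : Set ℝ} (hs : MeasurableSet s) :
    ∫ x in s, f x ∂(gaussianReal 0 1) = ∫ x in s, gg x * f x := by
  rw [gaussianReal_std, setIntegral_withDensity_eq_setIntegral_smul meas_ggNN f hs]
  refine setIntegral_congr_fun hs fun x _ => ?_
  simp [NNReal.smul_def, Real.coe_toNNReal _ (gg_nonneg x)]

lemma integral_gauss (f : ℝ → ℝ) :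
    ∫ x, f x ∂(gaussianReal 0 1) = ∫ x, gg x * f x := by
  rw [gaussianReal_std, integral_withDensity_eq_integral_smul meas_ggNN f]
  congr 1; funext x
  simp [NNReal.smul_def, Real.coe_toNNReal _ (gg_nonneg x)]

lemma integrable_gauss {f : ℝ → ℝ} (hf : Integrable (fun x => gg x * f x)) :
    Integrable f (gaussianReal 0 1) := by
  rw [gaussianReal_std, integrable_withDensity_iff_integrable_smul meas_ggNN]
  refine hf.congr (Eventually.of_forall fun x => ?_)
  simp [NNReal.smul_def, Real.coe_toNNReal _ (gg_nonneg x)]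

noncomputable def PP (t : ℝ) : ℝ := ∫ y in Ici t, gg y

lemma PP_nonneg (t : ℝ) : 0 ≤ PP t :=
  setIntegral_nonneg measurableSet_Ici fun x _ => gg_nonneg x

lemma PP_le_one (t : ℝ) : PP t ≤ 1 := by
  rw [← integral_gg]
  exact setIntegral_le_integral integrable_gg (Eventually.of_forall gg_nonneg)

lemma PP_zero : PP 0 = 1 / 2 := by
  have h := integral_gaussian_Ioi (1/2)
  rw [PP, integral_Ici_eq_integral_Ioi]
  simp only [funext gg_exp]
  rw [integral_const_mul, h]
  rw [show Real.pi / (1/2) = 2 * Real.pi by ring]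
  rw [inv_mul_eq_div, div_div, eq_div_iff (by positivity)]
  rw [div_mul_eq_mul_div, div_eq_one_iff_eq (by positivity)]
  ring

lemma PP_eq (t : ℝ) : PP t = 1 - ((∫ y in Iic 0, gg y) + ∫ y in (0:ℝ)..t, gg y) := by
  have h1 : ∫ y in Iic t, gg y = (∫ y in Iic 0, gg y) + ∫ y in (0:ℝ)..t, gg y := by
    have := intervalIntegral.integral_Iic_sub_Iic (integrable_gg.integrableOn (s := Iic 0))
      (integrable_gg.integrableOn (s := Iic t))
    linarith
  have h2 : (∫ y in Iic t, gg y) + PP t = 1 := by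
    rw [PP, ← integral_gg, ← integral_add_compl measurableSet_Iic integrable_gg]
    congr 1
    rw [show (Iic t)ᶜ = Ioi t from compl_Iic, integral_Ici_eq_integral_Ioi]
  linarith

lemma hasDerivAt_PP (t : ℝ) : HasDerivAt PP (-gg t) t := by
  have h : HasDerivAt (fun u => ∫ y in (0:ℝ)..u, gg y) (gg t) t :=
    (gg_cont.integral_hasStrictDerivAt 0 t).hasDerivAt
  have := ((h.const_add ((∫ y in Iic 0, gg y))).const_sub 1)
  refine this.congr_deriv ?_ |>.congr_of_eventuallyEq ?_ |>.congr_deriv rfl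
  · ring
  · exact Eventually.of_forall fun u => (PP_eq u)

lemma tail_first_moment (t : ℝ) : ∫ y in Ici t, gg y * y = gg t := by
  rw [integral_Ici_eq_integral_Ioi]
  have h := integral_Ioi_of_hasDerivAt_of_tendsto' (a := t) (f := fun y => -gg y)
    (f' := fun y => gg y * y) (m := 0)
    (fun x _ => by simpa [mul_comm, neg_mul] using (hasDerivAt_gg x).fun_neg)
    (by
      refine (integrable_id_mul_gg.congr (Eventually.of_forall fun x => by ring)).integrableOn)
    ?_
  · simpa using h
  · have : Tendsto gg atTop (nhds 0) := by
      rw [show (0:ℝ) = (Real.sqrt (2 * Real.pi))⁻¹ * 0 by ring]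
      simp only [funext gg_exp]
      refine Tendsto.const_mul _ (Real.tendsto_exp_atBot.comp ?_)
      have h2 : Tendsto (fun x : ℝ => x ^ 2) atTop atTop := tendsto_pow_atTop (by norm_num)
      have h3 := tendsto_neg_atBot_iff.2 (h2.atTop_div_const (by norm_num : (0:ℝ) < 2))
      exact h3.congr fun x => by ring
    simpa using this.neg

lemma PP_cont : Continuous PP := by
  have : Differentiable ℝ PP := fun t => (hasDerivAt_PP t).differentiableAt
  exact this.continuous

lemma gg_mul_gg (a x : ℝ) :
    gg x * gg (a * x) = (2 * Real.pi)⁻¹ * Real.exp (-((1 + a ^ 2) / 2) * x ^ 2) := by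
  rw [gg_exp, gg_exp]
  rw [show (Real.sqrt (2*Real.pi))⁻¹ * Real.exp (-(1/2) * x^2) * ((Real.sqrt (2*Real.pi))⁻¹ * Real.exp (-(1/2) * (a*x)^2)) = ((Real.sqrt (2*Real.pi)) * (Real.sqrt (2*Real.pi)))⁻¹ * (Real.exp (-(1/2)*x^2) * Real.exp (-(1/2)*(a*x)^2)) by rw [mul_inv]; ring]
  rw [Real.mul_self_sqrt (by positivity), ← Real.exp_add]
  congr 1
  ring

lemma integrable_gg_mul_gg (a : ℝ) : Integrable (fun x => gg x * gg (a * x)) := by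
  simp only [funext (gg_mul_gg a)]
  exact (integrable_exp_neg_mul_sq (by positivity : (0:ℝ) < (1 + a^2)/2)).const_mul _

lemma gg_tendsto_atBot : Tendsto gg atBot (nhds 0) := by
  simp only [funext gg_exp]
  rw [show (0:ℝ) = (Real.sqrt (2 * Real.pi))⁻¹ * 0 by ring]
  refine Tendsto.const_mul _ (Real.tendsto_exp_atBot.comp ?_)
  have h2 : Tendsto (fun x : ℝ => x ^ 2) atBot atTop := by
    have := (tendsto_pow_atTop (n := 2) (by norm_num)).comp tendsto_neg_atBot_atTop (α := ℝ)
    exact this.congr fun x => by simp [neg_pow]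
  have h3 := tendsto_neg_atBot_iff.2 (h2.atTop_div_const (by norm_num : (0:ℝ) < 2))
  exact h3.congr fun x => by ring

lemma gauss_Iic (b : ℝ) (hb : 0 < b) :
    ∫ x in Iic (0:ℝ), Real.exp (-b * x ^ 2) = Real.sqrt (Real.pi / b) / 2 := by
  have h : ∀ x : ℝ, Real.exp (-b * x ^ 2) = (fun y => Real.exp (-b * y ^ 2)) (-x) := by
    intro x; simp [neg_pow]
  calc ∫ x in Iic (0:ℝ), Real.exp (-b * x ^ 2)
      = ∫ x in Iic (0:ℝ), (fun y => Real.exp (-b * y ^ 2)) (-x) := by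
        exact setIntegral_congr_fun measurableSet_Iic fun x _ => h x
    _ = ∫ x in Ioi (-(0:ℝ)), Real.exp (-b * x ^ 2) :=
        integral_comp_neg_Iic 0 (fun y => Real.exp (-b * y ^ 2))
    _ = Real.sqrt (Real.pi / b) / 2 := by rw [neg_zero]; exact integral_gaussian_Ioi b

lemma integrableOn_t1 (a : ℝ) :
    IntegrableOn (fun x => x * gg x * PP (-(a * x))) (Iic (0:ℝ)) := by
  apply Integrable.integrableOn
  refine Integrable.mono' (integrable_id_mul_gg.abs) ?_ (Eventually.of_forall fun x => ?_)
  · exact (continuous_id.mul gg_cont |>.mul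
      (PP_cont.comp ((continuous_const.mul continuous_id).neg))).aestronglyMeasurable
  · rw [Real.norm_eq_abs, abs_mul]
    calc |x * gg x| * |PP (-(a*x))| ≤ |x * gg x| * 1 := by
          refine mul_le_mul_of_nonneg_left ?_ (abs_nonneg _)
          rw [abs_of_nonneg (PP_nonneg _)]; exact PP_le_one _
      _ = |x * gg x| := mul_one _

lemma key_FTC (a : ℝ) :
    ∫ x in Iic (0:ℝ), (x * gg x * PP (-(a * x)) - a * (gg x * gg (a * x)))
      = -(gg 0) * (1/2) := by
  have hderiv : ∀ x ∈ Iio (0:ℝ), HasDerivAt (fun x => -gg x * PP (-(a * x)))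
      (x * gg x * PP (-(a * x)) - a * (gg x * gg (a * x))) x := by
    intro x _
    have h1 : HasDerivAt (fun x => -gg x) (x * gg x) x := by
      simpa using (hasDerivAt_gg x).fun_neg
    have hin : HasDerivAt (fun x : ℝ => -(a * x)) (-a) x := by
      simpa using ((hasDerivAt_id x).const_mul a).fun_neg
    have h2 : HasDerivAt (fun x => PP (-(a * x))) (-gg (-(a * x)) * -a) x :=
      HasDerivAt.comp (h₂ := PP) x (hasDerivAt_PP (-(a * x))) hin
    have := h1.fun_mul h2
    convert! this using 1
    rw [show gg (-(a*x)) = gg (a*x) from gg_even (a*x)]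
    ring
  have hcont : ContinuousWithinAt (fun x => -gg x * PP (-(a * x))) (Iic 0) 0 := by
    refine Continuous.continuousWithinAt ?_
    exact (gg_cont.neg).mul (PP_cont.comp ((continuous_const.mul continuous_id).neg))
  have hint : IntegrableOn (fun x => x * gg x * PP (-(a * x)) - a * (gg x * gg (a * x))) (Iic 0) :=
    (integrableOn_t1 a).sub (((integrable_gg_mul_gg a).const_mul a).integrableOn)
  have htend : Tendsto (fun x => -gg x * PP (-(a * x))) atBot (nhds 0) := by
    refine squeeze_zero_norm (fun x => ?_) gg_tendsto_atBot
    rw [Real.norm_eq_abs, abs_mul, abs_neg, abs_of_nonneg (gg_nonneg x),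
      abs_of_nonneg (PP_nonneg _)]
    calc gg x * PP (-(a*x)) ≤ gg x * 1 := mul_le_mul_of_nonneg_left (PP_le_one _) (gg_nonneg x)
      _ = gg x := mul_one _
  have := integral_Iic_of_hasDerivAt_of_tendsto hcont hderiv hint htend
  rw [this]
  simp [PP_zero]

lemma key1 (a : ℝ) :
    ∫ x in Iic (0:ℝ), x * gg x * PP (-(a * x))
      = -(gg 0) * (1/2) + a * ∫ x in Iic (0:ℝ), gg x * gg (a * x) := by
  have h := key_FTC a
  rw [integral_sub (integrableOn_t1 a)
    (((integrable_gg_mul_gg a).const_mul a).integrableOn), integral_const_mul] at h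
  linarith

lemma GI_val (a : ℝ) :
    ∫ x in Iic (0:ℝ), gg x * gg (a * x)
      = (2 * Real.pi)⁻¹ * (Real.sqrt (Real.pi / ((1 + a ^ 2) / 2)) / 2) := by
  simp only [funext (gg_mul_gg a)]
  rw [integral_const_mul, gauss_Iic _ (by positivity : (0:ℝ) < (1 + a^2)/2)]

lemma integrable_id_gauss : Integrable (fun x => x) (gaussianReal 0 1) :=
  integrable_gauss (integrable_id_mul_gg.congr (Eventually.of_forall fun x => by ring))

lemma integrable_fst_gauss :
    Integrable (fun p : ℝ × ℝ => p.1) ((gaussianReal 0 1).prod (gaussianReal 0 1)) := by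
  have h : Measure.map Prod.fst ((gaussianReal 0 1).prod (gaussianReal 0 1)) = gaussianReal 0 1 := by
    rw [Measure.map_fst_prod]; simp
  rw [show (fun p : ℝ × ℝ => p.1) = (fun x : ℝ => x) ∘ Prod.fst from rfl]
  rw [← integrable_map_measure ?_ measurable_fst.aemeasurable]
  · rw [h]; exact integrable_id_gauss
  · rw [h]; exact integrable_id_gauss.aestronglyMeasurable

lemma integrable_snd_gauss :
    Integrable (fun p : ℝ × ℝ => p.2) ((gaussianReal 0 1).prod (gaussianReal 0 1)) := by
  have h : Measure.map Prod.snd ((gaussianReal 0 1).prod (gaussianReal 0 1)) = gaussianReal 0 1 := by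
    rw [Measure.map_snd_prod]; simp
  rw [show (fun p : ℝ × ℝ => p.2) = (fun x : ℝ => x) ∘ Prod.snd from rfl]
  rw [← integrable_map_measure ?_ measurable_snd.aemeasurable]
  · rw [h]; exact integrable_id_gauss
  · rw [h]; exact integrable_id_gauss.aestronglyMeasurable

lemma measurableSet_S (ρ : ℝ) :
    MeasurableSet {p : ℝ × ℝ | p.1 ≤ 0 ∧
      0 ≤ p.1 + (ρ * p.1 + Real.sqrt (1 - ρ ^ 2) * p.2)} := by
  refine MeasurableSet.inter ?_ ?_
  · exact measurableSet_le measurable_fst measurable_const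
  · exact measurableSet_le measurable_const
      (measurable_fst.add ((measurable_fst.const_mul ρ).add (measurable_snd.const_mul _)))

lemma reduce (ρ : ℝ) (hρ₁ : -1 < ρ) (hρ₂ : ρ < 1) (f : ℝ → ℝ → ℝ)
    (hint : Integrable (fun p : ℝ × ℝ => f p.1 p.2)
      ((gaussianReal 0 1).prod (gaussianReal 0 1))) :
    ∫ p in {p : ℝ × ℝ | p.1 ≤ 0 ∧
        0 ≤ p.1 + (ρ * p.1 + Real.sqrt (1 - ρ ^ 2) * p.2)}, f p.1 p.2
      ∂((gaussianReal 0 1).prod (gaussianReal 0 1))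
    = ∫ x in Iic (0:ℝ),
        (∫ y in Ici (-(((1 + ρ) / Real.sqrt (1 - ρ ^ 2)) * x)), f x y ∂(gaussianReal 0 1))
        ∂(gaussianReal 0 1) := by
  set μ := gaussianReal 0 1
  set s := Real.sqrt (1 - ρ ^ 2) with hs_def
  have hs : 0 < s := Real.sqrt_pos.2 (by nlinarith)
  set a := (1 + ρ) / s with ha_def
  have hsa : s * a = 1 + ρ := by rw [ha_def]; field_simp
  set S := {p : ℝ × ℝ | p.1 ≤ 0 ∧ 0 ≤ p.1 + (ρ * p.1 + s * p.2)} with hS_def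
  have hS : MeasurableSet S := measurableSet_S ρ
  rw [← integral_indicator hS]
  rw [integral_prod _ (hint.indicator hS)]
  have hpt : ∀ x, (∫ y, S.indicator (fun p : ℝ × ℝ => f p.1 p.2) (x, y) ∂μ)
      = (Iic (0:ℝ)).indicator (fun x => ∫ y in Ici (-(a * x)), f x y ∂μ) x := by
    intro x
    by_cases hx : x ≤ 0
    · have h1 : ∀ y, S.indicator (fun p : ℝ × ℝ => f p.1 p.2) (x, y)
          = (Ici (-(a * x))).indicator (fun y => f x y) y := by
        intro y
        have hiff : (x, y) ∈ S ↔ y ∈ Ici (-(a * x)) := by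
          simp only [hS_def, mem_setOf_eq, mem_Ici]
          constructor
          · rintro ⟨-, h⟩
            have h2 : 0 ≤ s * (a * x + y) := by nlinarith [hsa]
            nlinarith [(nonneg_of_mul_nonneg_right h2 hs : (0:ℝ) ≤ a * x + y)]
          · intro h
            refine ⟨hx, ?_⟩
            nlinarith [hsa, mul_nonneg hs.le (by linarith : (0:ℝ) ≤ a * x + y)]
        by_cases hmem : (x, y) ∈ S
        · rw [indicator_of_mem hmem, indicator_of_mem (hiff.1 hmem)]
        · rw [indicator_of_notMem hmem, indicator_of_notMem (fun h => hmem (hiff.2 h))]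
      rw [integral_congr_ae (Eventually.of_forall h1), integral_indicator measurableSet_Ici,
        indicator_of_mem (mem_Iic.mpr hx)]
    · have h1 : ∀ y, S.indicator (fun p : ℝ × ℝ => f p.1 p.2) (x, y) = 0 := by
        intro y
        refine indicator_of_notMem (fun h => hx h.1) _
      rw [integral_congr_ae (Eventually.of_forall h1), integral_zero,
        indicator_of_notMem (fun h => hx (mem_Iic.1 h))]
  rw [integral_congr_ae (Eventually.of_forall hpt), integral_indicator measurableSet_Iic]

lemma sq_eq_of (x y : ℝ) (hx : 0 ≤ x) (hy : 0 ≤ y) (h : x ^ 2 = y ^ 2) : x = y := by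
  nlinarith

lemma alg_core1 (ρ S1 S2 S3 S4 : ℝ) (hρ₁ : -1 < ρ) (hρ₂ : ρ < 1)
    (h1 : S1 ^ 2 = 1 - ρ ^ 2) (hS1 : 0 < S1)
    (h2 : S2 ^ 2 = Real.pi * (1 - ρ)) (hS2 : 0 ≤ S2)
    (h3 : S3 ^ 2 = 2 * Real.pi) (hS3 : 0 < S3)
    (h4 : S4 ^ 2 = (1 + ρ) / 2) (hS4 : 0 ≤ S4) :
    (1 + ρ) / S1 * ((2 * Real.pi)⁻¹ * (S2 / 2)) = S3⁻¹ / 2 * S4 := by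
  have hπ : (0:ℝ) < Real.pi := Real.pi_pos
  refine sq_eq_of _ _ ?_ (by positivity) ?_
  · have h0 : (0:ℝ) ≤ 1 + ρ := by linarith
    positivity
  · have e1 : ((1 + ρ) / S1 * ((2 * Real.pi)⁻¹ * (S2 / 2))) ^ 2
        = (1 + ρ) ^ 2 * S2 ^ 2 / (S1 ^ 2 * (2 * Real.pi) ^ 2 * 4) := by ring
    have e2 : (S3⁻¹ / 2 * S4) ^ 2 = S4 ^ 2 / (S3 ^ 2 * 4) := by ring
    rw [e1, e2, h1, h2, h3, h4]
    have hne : (1:ℝ) - ρ ^ 2 ≠ 0 := by nlinarith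
    field_simp
    ring

lemma alg_core2 (ρ S1 S2 S3 S4 : ℝ) (hρ₁ : -1 < ρ) (hρ₂ : ρ < 1)
    (h1 : S1 ^ 2 = 1 - ρ ^ 2) (hS1 : 0 < S1)
    (h2 : S2 ^ 2 = Real.pi * (1 - ρ)) (hS2 : 0 ≤ S2)
    (h3 : S3 ^ 2 = 2 * Real.pi) (hS3 : 0 < S3)
    (h4 : S4 ^ 2 = (1 + ρ) / 2) (hS4 : 0 ≤ S4) :
    S1 * ((2 * Real.pi)⁻¹ * (S2 / 2)) = S3⁻¹ / 2 * ((1 - ρ) * S4) := by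
  have hπ : (0:ℝ) < Real.pi := Real.pi_pos
  refine sq_eq_of _ _ (by positivity) ?_ ?_
  · have h0 : (0:ℝ) ≤ 1 - ρ := by linarith
    positivity
  · have e1 : (S1 * ((2 * Real.pi)⁻¹ * (S2 / 2))) ^ 2
        = S1 ^ 2 * S2 ^ 2 / ((2 * Real.pi) ^ 2 * 4) := by ring
    have e2 : (S3⁻¹ / 2 * ((1 - ρ) * S4)) ^ 2 = (1 - ρ) ^ 2 * S4 ^ 2 / (S3 ^ 2 * 4) := by ring
    rw [e1, e2, h1, h2, h3, h4]
    field_simp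
    ring

lemma hb_eq (ρ : ℝ) (hρ₁ : -1 < ρ) (hρ₂ : ρ < 1) :
    Real.pi / ((1 + ((1 + ρ) / Real.sqrt (1 - ρ ^ 2)) ^ 2) / 2) = Real.pi * (1 - ρ) := by
  have h1 : (0:ℝ) < 1 - ρ ^ 2 := by nlinarith
  have hs2 : Real.sqrt (1 - ρ ^ 2) ^ 2 = 1 - ρ ^ 2 := Real.sq_sqrt h1.le
  have hs : Real.sqrt (1 - ρ ^ 2) ≠ 0 := by positivity
  have ha2 : ((1 + ρ) / Real.sqrt (1 - ρ ^ 2)) ^ 2 = (1 + ρ) / (1 - ρ) := by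
    rw [div_pow, hs2]
    rw [show (1:ℝ) - ρ ^ 2 = (1 + ρ) * (1 - ρ) by ring]
    rw [show ((1:ℝ) + ρ) ^ 2 = (1 + ρ) * (1 + ρ) by ring]
    rw [mul_div_mul_left _ _ (by linarith : (1:ℝ) + ρ ≠ 0)]
  rw [ha2]
  have hne : (1:ℝ) - ρ ≠ 0 := by
    intro h; nlinarith
  field_simp
  ring

lemma alg1 (ρ : ℝ) (hρ₁ : -1 < ρ) (hρ₂ : ρ < 1) :
    ((1 + ρ) / Real.sqrt (1 - ρ ^ 2)) *
      ((2 * Real.pi)⁻¹ *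
        (Real.sqrt (Real.pi / ((1 + ((1 + ρ) / Real.sqrt (1 - ρ ^ 2)) ^ 2) / 2)) / 2))
    = (Real.sqrt (2 * Real.pi))⁻¹ / 2 * Real.sqrt ((1 + ρ) / 2) := by
  have h1 : (0:ℝ) < 1 - ρ ^ 2 := by nlinarith
  have hπ : (0:ℝ) < Real.pi := Real.pi_pos
  refine alg_core1 ρ _ _ _ _ hρ₁ hρ₂ (Real.sq_sqrt h1.le) (Real.sqrt_pos.2 h1)
    ?_ (Real.sqrt_nonneg _) (Real.sq_sqrt (by positivity)) (Real.sqrt_pos.2 (by positivity))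
    (Real.sq_sqrt (by linarith)) (Real.sqrt_nonneg _)
  rw [Real.sq_sqrt, hb_eq ρ hρ₁ hρ₂]
  rw [hb_eq ρ hρ₁ hρ₂]
  nlinarith [Real.pi_pos]

lemma alg2 (ρ : ℝ) (hρ₁ : -1 < ρ) (hρ₂ : ρ < 1) :
    Real.sqrt (1 - ρ ^ 2) *
      ((2 * Real.pi)⁻¹ *
        (Real.sqrt (Real.pi / ((1 + ((1 + ρ) / Real.sqrt (1 - ρ ^ 2)) ^ 2) / 2)) / 2))
    = (Real.sqrt (2 * Real.pi))⁻¹ / 2 * ((1 - ρ) * Real.sqrt ((1 + ρ) / 2)) := by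
  have h1 : (0:ℝ) < 1 - ρ ^ 2 := by nlinarith
  have hπ : (0:ℝ) < Real.pi := Real.pi_pos
  refine alg_core2 ρ _ _ _ _ hρ₁ hρ₂ (Real.sq_sqrt h1.le) (Real.sqrt_pos.2 h1)
    ?_ (Real.sqrt_nonneg _) (Real.sq_sqrt (by positivity)) (Real.sqrt_pos.2 (by positivity))
    (Real.sq_sqrt (by linarith)) (Real.sqrt_nonneg _)
  rw [Real.sq_sqrt, hb_eq ρ hρ₁ hρ₂]
  rw [hb_eq ρ hρ₁ hρ₂]
  nlinarith [Real.pi_pos]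

lemma gg_zero : gg 0 = (Real.sqrt (2 * Real.pi))⁻¹ := by
  simp [gg]

/-- For a bivariate centered Gaussian `(X₁,X₂)` with unit variances and correlation
`ρ ∈ (−1,1)` — realized as `X₁ = Y₁`, `X₂ = ρY₁ + √(1−ρ²)Y₂` with `Y₁, Y₂` i.i.d.
standard normal — one has
`E[X₁ · 1_{X₁ ≤ 0, X₁+X₂ ≥ 0}] = (φ(0)/2)(√((1+ρ)/2) − 1)` and
`E[X₂ · 1_{X₁ ≤ 0, X₁+X₂ ≥ 0}] = (φ(0)/2)(√((1+ρ)/2) − ρ)`. -/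
theorem stmt10 (ρ : ℝ) (hρ₁ : -1 < ρ) (hρ₂ : ρ < 1) :
    (∫ p in {p : ℝ × ℝ | p.1 ≤ 0 ∧
        0 ≤ p.1 + (ρ * p.1 + Real.sqrt (1 - ρ ^ 2) * p.2)}, p.1
        ∂((gaussianReal 0 1).prod (gaussianReal 0 1)) =
      (1 / Real.sqrt (2 * Real.pi)) / 2 * (Real.sqrt ((1 + ρ) / 2) - 1)) ∧
    (∫ p in {p : ℝ × ℝ | p.1 ≤ 0 ∧
        0 ≤ p.1 + (ρ * p.1 + Real.sqrt (1 - ρ ^ 2) * p.2)},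
        (ρ * p.1 + Real.sqrt (1 - ρ ^ 2) * p.2)
        ∂((gaussianReal 0 1).prod (gaussianReal 0 1)) =
      (1 / Real.sqrt (2 * Real.pi)) / 2 * (Real.sqrt ((1 + ρ) / 2) - ρ)) := by
  have h1 : (0:ℝ) < 1 - ρ ^ 2 := by nlinarith
  set s : ℝ := Real.sqrt (1 - ρ ^ 2) with hs_def
  have hs : 0 < s := Real.sqrt_pos.2 h1
  set a : ℝ := (1 + ρ) / s with ha_def
  set μ := gaussianReal 0 1 with hμ_def
  -- inner integral computations
  have inner1 : ∀ x : ℝ, (∫ y in Ici (-(a * x)), x ∂μ) = PP (-(a * x)) * x := by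
    intro x
    rw [hμ_def, setIntegral_gauss (fun _ => x) measurableSet_Ici, integral_mul_const]
    rfl
  have inner2 : ∀ x : ℝ, (∫ y in Ici (-(a * x)), (ρ * x + s * y) ∂μ)
      = ρ * x * PP (-(a * x)) + s * gg (-(a * x)) := by
    intro x
    rw [hμ_def, setIntegral_gauss (fun y => ρ * x + s * y) measurableSet_Ici]
    have hsplit : ∀ y : ℝ, gg y * (ρ * x + s * y) = gg y * (ρ * x) + s * (gg y * y) := by
      intro y; ring
    rw [setIntegral_congr_fun measurableSet_Ici fun y _ => hsplit y]
    rw [integral_add ((integrable_gg.mul_const _).integrableOn)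
      (((integrable_id_mul_gg.congr (Eventually.of_forall fun y => by ring)).const_mul
        s).integrableOn)]
    rw [integral_mul_const, integral_const_mul, tail_first_moment]
    rw [PP]
    ring
  -- the two outer integrals
  have out1 : ∫ x in Iic (0:ℝ), (PP (-(a * x)) * x) ∂μ
      = -(gg 0) * (1/2) + a * ∫ x in Iic (0:ℝ), gg x * gg (a * x) := by
    rw [hμ_def, setIntegral_gauss (fun x => PP (-(a * x)) * x) measurableSet_Iic]
    rw [setIntegral_congr_fun measurableSet_Iic
      (fun x _ => by ring :
        ∀ x ∈ Iic (0:ℝ), gg x * (PP (-(a * x)) * x) = x * gg x * PP (-(a * x)))]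
    exact key1 a
  have out2 : ∫ x in Iic (0:ℝ), (ρ * x * PP (-(a * x)) + s * gg (-(a * x))) ∂μ
      = ρ * (-(gg 0) * (1/2) + a * ∫ x in Iic (0:ℝ), gg x * gg (a * x))
        + s * ∫ x in Iic (0:ℝ), gg x * gg (a * x) := by
    rw [hμ_def, setIntegral_gauss _ measurableSet_Iic]
    have hsplit : ∀ x : ℝ, gg x * (ρ * x * PP (-(a * x)) + s * gg (-(a * x)))
        = ρ * (x * gg x * PP (-(a * x))) + s * (gg x * gg (a * x)) := by
      intro x
      rw [show gg (-(a * x)) = gg (a * x) from gg_even (a * x)]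
      ring
    rw [setIntegral_congr_fun measurableSet_Iic fun x _ => hsplit x]
    rw [integral_add (((integrableOn_t1 a).const_mul ρ))
      (((integrable_gg_mul_gg a).const_mul s).integrableOn)]
    rw [integral_const_mul, integral_const_mul, key1 a]
  have hGI := GI_val a
  constructor
  · rw [reduce ρ hρ₁ hρ₂ (fun x _ => x) integrable_fst_gauss]
    rw [setIntegral_congr_fun measurableSet_Iic fun x _ => inner1 x]
    rw [out1, hGI, ha_def, hs_def]
    rw [alg1 ρ hρ₁ hρ₂, gg_zero, one_div]
    ring
  · rw [reduce ρ hρ₁ hρ₂ (fun x y => ρ * x + s * y)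
      ((integrable_fst_gauss.const_mul ρ).add (integrable_snd_gauss.const_mul s))]
    rw [setIntegral_congr_fun measurableSet_Iic fun x _ => inner2 x]
    rw [out2, hGI, ha_def, hs_def]
    rw [alg1 ρ hρ₁ hρ₂, alg2 ρ hρ₁ hρ₂, gg_zero, one_div]
    ring
end

section
/- Let X = (X_1,...,X_p) be a centered Gaussian vector with positive definite covariance Σ, and suppose f̃ : ℝ^{p−1} → ℝ is a bounded measurable function. Define α := Σ^{-1} E[f̃(X_2−X_1, ..., X_p−X_{p−1}) · X]. Then the sum of the components of α is zero: Σ_{i=1}^p α_i = 0. -/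
open MeasureTheory ProbabilityTheory Matrix
open scoped ENNReal

private lemma lintegral_pi_prod : ∀ {n : ℕ} (μ : Fin n → Measure ℝ) [∀ i, SigmaFinite (μ i)]
    (g : Fin n → ℝ → ℝ≥0∞), (∀ i, Measurable (g i)) →
    ∫⁻ y, ∏ i, g i (y i) ∂Measure.pi μ = ∏ i, ∫⁻ x, g i x ∂(μ i) := by
  intro n
  induction n with
  | zero => intro μ _ g hg; simp
  | succ n ih =>
    intro μ _ g hg
    have key := (measurePreserving_piFinSuccAbove μ 0).lintegral_comp
      (f := fun q : ℝ × (Fin n → ℝ) => g 0 q.1 * ∏ j, g (Fin.succ j) (q.2 j))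
      (((hg 0).comp measurable_fst).mul
        (Finset.measurable_prod _ fun j _ => (hg (Fin.succ j)).comp
          ((measurable_pi_apply j).comp measurable_snd)))
    simp only [MeasurableEquiv.piFinSuccAbove_apply, Fin.insertNthEquiv,
      Equiv.coe_fn_symm_mk, Fin.zero_succAbove] at key
    calc ∫⁻ y, ∏ i, g i (y i) ∂Measure.pi μ
        = ∫⁻ y, g 0 (y 0) * ∏ j : Fin n, g (Fin.succ j) (y (Fin.succ j)) ∂Measure.pi μ := by
          simp_rw [Fin.prod_univ_succ]
      _ = ∫⁻ q : ℝ × (Fin n → ℝ), g 0 q.1 * ∏ j : Fin n, g (Fin.succ j) (q.2 j)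
            ∂((μ 0).prod (Measure.pi fun j : Fin n => μ (Fin.succ j))) := key
      _ = (∫⁻ x, g 0 x ∂μ 0) * ∫⁻ z : Fin n → ℝ, ∏ j : Fin n, g (Fin.succ j) (z j)
            ∂(Measure.pi fun j : Fin n => μ (Fin.succ j)) := by
          exact lintegral_prod_mul (hg 0).aemeasurable
            (Finset.measurable_prod _ fun j _ => (hg (Fin.succ j)).comp
              (measurable_pi_apply j)).aemeasurable
      _ = ∏ i, ∫⁻ x, g i x ∂(μ i) := by
          rw [ih _ _ fun j => hg (Fin.succ j), Fin.prod_univ_succ]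

private lemma pi_gaussian_eq {n : ℕ} :
    Measure.pi (fun _ : Fin n => gaussianReal 0 1)
      = (volume : Measure (Fin n → ℝ)).withDensity
          (fun y => ∏ i, gaussianPDF 0 1 (y i)) := by
  refine Measure.pi_eq fun s hs => ?_
  rw [withDensity_apply _ (MeasurableSet.univ_pi hs),
    ← lintegral_indicator (MeasurableSet.univ_pi hs) _]
  have hind : ∀ y : Fin n → ℝ,
      (Set.univ.pi s).indicator (fun y => ∏ i, gaussianPDF 0 1 (y i)) y
      = ∏ i, (s i).indicator (gaussianPDF 0 1) (y i) := by
    intro y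
    by_cases hy : y ∈ Set.univ.pi s
    · rw [Set.indicator_of_mem hy]
      exact Finset.prod_congr rfl fun i _ =>
        (Set.indicator_of_mem (hy i (Set.mem_univ i)) _).symm
    · rw [Set.indicator_of_notMem hy]
      rw [Set.mem_univ_pi] at hy
      push_neg at hy
      obtain ⟨i, hi⟩ := hy
      exact (Finset.prod_eq_zero (Finset.mem_univ i)
        (Set.indicator_of_notMem hi _)).symm
  simp_rw [hind]
  rw [volume_pi, lintegral_pi_prod _ _
    (fun i => (measurable_gaussianPDF 0 1).indicator (hs i))]
  refine Finset.prod_congr rfl fun i _ => ?_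
  rw [lintegral_indicator (hs i) _, gaussianReal_of_var_ne_zero _ one_ne_zero,
    withDensity_apply _ (hs i)]

private lemma map_gauss {n : ℕ} (M : Matrix (Fin n) (Fin n) ℝ) (hMM : M * M = 1) (hsymm : Mᵀ = M) :
    Measure.map (fun y => M.mulVec y) (Measure.pi fun _ : Fin n => gaussianReal 0 1)
      = Measure.pi fun _ : Fin n => gaussianReal 0 1 := by
  have hdet : M.det * M.det = 1 := by rw [← det_mul, hMM, det_one]
  have hdet0 : M.det ≠ 0 := by
    intro h; rw [h, zero_mul] at hdet; exact zero_ne_one hdet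
  have hinv : ∀ y : Fin n → ℝ, M.mulVec (M.mulVec y) = y := by
    intro y; rw [mulVec_mulVec, hMM, one_mulVec]
  have htoLin : (fun y : Fin n → ℝ => M.mulVec y) = ⇑(Matrix.toLin' M) := by
    funext y; rw [Matrix.toLin'_apply]
  have hmeas : Measurable (fun y : Fin n → ℝ => M.mulVec y) := by
    rw [htoLin]
    exact (LinearMap.continuous_of_finiteDimensional _).measurable
  have hvol : Measure.map (fun y : Fin n → ℝ => M.mulVec y) volume = volume := by
    rw [htoLin, Real.map_matrix_volume_pi_eq_smul_volume_pi hdet0]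
    have habs : |M.det⁻¹| = 1 := by
      rw [abs_inv, inv_eq_one]
      have : |M.det| * |M.det| = 1 := by rw [← abs_mul, hdet, abs_one]
      nlinarith [abs_nonneg M.det]
    rw [habs, ENNReal.ofReal_one, one_smul]
  have hnorm : ∀ y : Fin n → ℝ,
      (∏ i, gaussianPDF 0 1 (M.mulVec y i)) = ∏ i, gaussianPDF 0 1 (y i) := by
    intro y
    have hsum : ∑ i, (M.mulVec y i)^2 = ∑ i, (y i)^2 := by
      have h1 : M.mulVec y ⬝ᵥ M.mulVec y = y ⬝ᵥ y := by
        rw [dotProduct_mulVec,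
          show M.mulVec y ᵥ* M = M *ᵥ (M *ᵥ y) by rw [← mulVec_transpose, hsymm], hinv]
      simpa [dotProduct, sq] using h1
    have hsum' : (∑ i, -(M.mulVec y i)^2) = ∑ i, -(y i)^2 := by
      rw [Finset.sum_neg_distrib, Finset.sum_neg_distrib, hsum]
    simp only [gaussianPDF_def, gaussianPDFReal]
    rw [← ENNReal.ofReal_prod_of_nonneg, ← ENNReal.ofReal_prod_of_nonneg]
    · congr 1
      rw [Finset.prod_mul_distrib, Finset.prod_mul_distrib, ← Real.exp_sum, ← Real.exp_sum]
      congr 2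
      simp only [sub_zero, ← Finset.sum_div]
      rw [hsum']
    · intro i _; positivity
    · intro i _; positivity
  have hD : Measurable (fun y : Fin n → ℝ => ∏ i, gaussianPDF 0 1 (y i)) :=
    Finset.measurable_prod _ fun i _ =>
      (measurable_gaussianPDF 0 1).comp (measurable_pi_apply i)
  ext s hs
  rw [Measure.map_apply hmeas hs, pi_gaussian_eq,
    withDensity_apply _ (hmeas hs), withDensity_apply _ hs,
    ← lintegral_indicator (hmeas hs) _,
    ← lintegral_indicator hs _]
  conv_lhs => rw [← hvol]
  rw [lintegral_map (hD.indicator (hmeas hs)) hmeas]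
  refine lintegral_congr fun y => ?_
  by_cases h : y ∈ s
  · rw [Set.indicator_of_mem h, Set.indicator_of_mem
      (show M.mulVec y ∈ (fun y => M.mulVec y) ⁻¹' s from by
        simp only [Set.mem_preimage, hinv]; exact h)]
    exact hnorm y
  · rw [Set.indicator_of_notMem h, Set.indicator_of_notMem
      (show M.mulVec y ∉ (fun y => M.mulVec y) ⁻¹' s from by
        simp only [Set.mem_preimage, hinv]; exact h)]

private lemma integrable_eval_gauss {n : ℕ} (j : Fin n) :
    Integrable (fun y : Fin n → ℝ => y j) (Measure.pi fun _ : Fin n => gaussianReal 0 1) := by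
  classical
  have hD : Measurable (fun y : Fin n → ℝ => ∏ i, gaussianPDF 0 1 (y i)) :=
    Finset.measurable_prod _ fun i _ =>
      (measurable_gaussianPDF 0 1).comp (measurable_pi_apply i)
  have hDfin : ∀ᵐ y : Fin n → ℝ ∂(volume), (∏ i, gaussianPDF 0 1 (y i)) < ⊤ := by
    refine ae_of_all _ fun y => ENNReal.prod_lt_top fun i _ => ?_
    rw [gaussianPDF_def]
    exact ENNReal.ofReal_lt_top
  rw [pi_gaussian_eq, integrable_withDensity_iff_integrable_smul' hD hDfin]
  set h : Fin n → ℝ → ℝ := fun i =>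
    if i = j then (fun x => gaussianPDFReal 0 1 x * x) else gaussianPDFReal 0 1 with hh
  have heq : (fun y : Fin n → ℝ => (∏ i, gaussianPDF 0 1 (y i)).toReal • y j)
      = fun y => ∏ i, h i (y i) := by
    funext y
    have ht : (∏ i, gaussianPDF 0 1 (y i)).toReal = ∏ i, gaussianPDFReal 0 1 (y i) := by
      rw [ENNReal.toReal_prod]
      exact Finset.prod_congr rfl fun i _ => by
        rw [gaussianPDF_def, ENNReal.toReal_ofReal (gaussianPDFReal_nonneg _ _ _)]
    rw [smul_eq_mul, ht, ← Finset.prod_erase_mul _ _ (Finset.mem_univ j),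
      ← Finset.prod_erase_mul _ _ (Finset.mem_univ j)]
    have h1 : ∀ i ∈ Finset.univ.erase j, h i (y i) = gaussianPDFReal 0 1 (y i) := by
      intro i hi
      rw [hh]
      simp [Finset.mem_erase.mp hi |>.1]
    rw [Finset.prod_congr rfl h1]
    have h2 : h j (y j) = gaussianPDFReal 0 1 (y j) * y j := by rw [hh]; simp
    rw [h2]
    ring
  rw [heq]
  refine Integrable.fintype_prod (𝕜 := ℝ) fun i => ?_
  by_cases hij : i = j
  · rw [hh]; simp only [hij, if_true]
    have : (fun x : ℝ => gaussianPDFReal 0 1 x * x)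
        = fun x : ℝ => (√(2 * Real.pi))⁻¹ * (x * Real.exp (-(1/2) * x^2)) := by
      funext x
      rw [gaussianPDFReal]
      push_cast [NNReal.coe_one]
      rw [show -(x - 0)^2/(2*(1:ℝ)) = -(1/2) * x^2 by ring]
      ring_nf
    rw [this]
    exact (integrable_mul_exp_neg_mul_sq (by norm_num : (0:ℝ) < 1/2)).const_mul _
  · rw [hh]; simp only [hij, if_false]
    exact integrable_gaussianPDFReal 0 1

/-- Let `X = A·Y` with `Y` standard Gaussian on `ℝ^{p+1}` and `AAᵀ = Σ` positive
definite, so `X ~ N(0,Σ)`. For bounded measurable `f̃ : ℝ^p → ℝ` and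
`α := Σ⁻¹ E[f̃(X₂−X₁,…,X_{p+1}−X_p) · X]`, the components of `α` sum to zero. -/
theorem stmt18 (p : ℕ) (Cov A : Matrix (Fin (p+1)) (Fin (p+1)) ℝ)
    (hCov : Cov.PosDef) (hA : A * A.transpose = Cov)
    (ftil : (Fin p → ℝ) → ℝ) (hmeas : Measurable ftil)
    (hbdd : ∃ C : ℝ, ∀ z, |ftil z| ≤ C) :
    ∑ i, (Cov⁻¹.mulVec (fun i =>
        ∫ y, ftil (fun k : Fin p => A.mulVec y k.succ - A.mulVec y k.castSucc) *
          A.mulVec y i ∂(Measure.pi fun _ : Fin (p+1) => gaussianReal 0 1))) i = 0 := by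
  classical
  obtain ⟨C, hC⟩ := hbdd
  set μ : Measure (Fin (p+1) → ℝ) := Measure.pi fun _ => gaussianReal 0 1 with hμdef
  set F : (Fin (p+1) → ℝ) → ℝ :=
    fun y => ftil (fun k : Fin p => A.mulVec y k.succ - A.mulVec y k.castSucc) with hFdef
  set v : Fin (p+1) → ℝ := fun i => ∫ y, F y * A.mulVec y i ∂μ with hvdef
  -- basic matrix facts
  have hdetCov : IsUnit Cov.det := hCov.det_pos.ne'.isUnit
  have hCovsymm : Covᵀ = Cov := by
    ext i j
    rw [transpose_apply]
    simpa using congrFun (congrFun hCov.isHermitian i) j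
  set u : Fin (p+1) → ℝ := Cov⁻¹.mulVec (fun _ => (1:ℝ)) with hudef
  set w : Fin (p+1) → ℝ := Aᵀ.mulVec u with hwdef
  have hAw : A.mulVec w = fun _ => (1:ℝ) := by
    rw [hwdef, mulVec_mulVec, hA, hudef, mulVec_mulVec, Matrix.mul_nonsing_inv _ hdetCov,
      one_mulVec]
  have hwvec : ∀ x : Fin (p+1) → ℝ, u ⬝ᵥ A.mulVec x = w ⬝ᵥ x := by
    intro x
    rw [dotProduct_mulVec, hwdef, mulVec_transpose]
  set c : ℝ := w ⬝ᵥ w with hcdef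
  have hc : c = u ⬝ᵥ (fun _ => (1:ℝ)) := by
    rw [hcdef, ← hwvec w, hAw]
  have hcpos : 0 < c := by
    rw [hc, hudef, dotProduct_comm]
    have h1 : (fun _ => (1:ℝ)) ≠ (0 : Fin (p+1) → ℝ) := by
      intro h
      exact one_ne_zero (congrFun h 0)
    simpa using hCov.inv.re_dotProduct_pos h1
  have hc0 : c ≠ 0 := hcpos.ne'
  -- measurability
  have hmeasA : Measurable (fun y : Fin (p+1) → ℝ => A.mulVec y) := by
    have : (fun y : Fin (p+1) → ℝ => A.mulVec y) = ⇑(Matrix.toLin' A) := by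
      funext y; rw [Matrix.toLin'_apply]
    rw [this]
    exact (LinearMap.continuous_of_finiteDimensional _).measurable
  have hFmeas : Measurable F := by
    refine hmeas.comp (measurable_pi_lambda _ fun k => ?_)
    exact ((measurable_pi_apply _).comp hmeasA).sub ((measurable_pi_apply _).comp hmeasA)
  have hFbd : ∀ y, ‖F y‖ ≤ C := fun y => by rw [Real.norm_eq_abs, hFdef]; exact hC _
  -- integrability
  have hIntdot : ∀ a : Fin (p+1) → ℝ, Integrable (fun y => a ⬝ᵥ y) μ := by
    intro a
    have : (fun y : Fin (p+1) → ℝ => a ⬝ᵥ y) = fun y => ∑ j, a j * y j := by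
      funext y; rw [dotProduct]
    rw [this]
    exact integrable_finset_sum _ fun j _ => (integrable_eval_gauss j).const_mul (a j)
  have hIntF : ∀ a : Fin (p+1) → ℝ, Integrable (fun y => F y * (a ⬝ᵥ y)) μ := by
    intro a
    exact Integrable.bdd_mul (hIntdot a) hFmeas.aestronglyMeasurable (ae_of_all _ hFbd)
  have hrow : ∀ (i : Fin (p+1)) (y : Fin (p+1) → ℝ), A.mulVec y i = (A i) ⬝ᵥ y :=
    fun i y => rfl
  -- step 1 : goal = u ⬝ᵥ v
  have hstep1 : ∑ i, (Cov⁻¹.mulVec v) i = u ⬝ᵥ v := by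
    have h1 : ∑ i, (Cov⁻¹.mulVec v) i = (fun _ => (1:ℝ)) ⬝ᵥ Cov⁻¹.mulVec v := by
      rw [dotProduct]; simp
    rw [h1, dotProduct_mulVec, hudef]
    congr 1
    rw [← mulVec_transpose, transpose_nonsing_inv, hCovsymm]
  have hIntF' : ∀ i : Fin (p+1), Integrable (fun y => F y * A.mulVec y i) μ :=
    fun i => hIntF (A i)
  -- step 2 : u ⬝ᵥ v = ∫ F y * (w ⬝ᵥ y)
  have hstep2 : u ⬝ᵥ v = ∫ y, F y * (w ⬝ᵥ y) ∂μ := by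
    rw [dotProduct, hvdef]
    have h1 : ∀ i : Fin (p+1), u i * (∫ y, F y * A.mulVec y i ∂μ)
        = ∫ y, u i * (F y * A.mulVec y i) ∂μ := fun i => (integral_const_mul _ _).symm
    simp_rw [h1]
    rw [← integral_finset_sum _ fun i _ => ((hIntF' i).const_mul (u i))]
    refine integral_congr_ae (ae_of_all _ fun y => ?_)
    have h2 : ∑ i, u i * (F y * A.mulVec y i) = F y * (u ⬝ᵥ A.mulVec y) := by
      rw [dotProduct, Finset.mul_sum]
      exact Finset.sum_congr rfl fun i _ => by ring
    show ∑ i, u i * (F y * (A.mulVec y) i) = F y * (w ⬝ᵥ y)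
    rw [h2, hwvec]
  -- the reflection matrix
  set N : Matrix (Fin (p+1)) (Fin (p+1)) ℝ := vecMulVec w w with hNdef
  set M : Matrix (Fin (p+1)) (Fin (p+1)) ℝ := 1 - (2/c) • N with hMdef
  have hMsymm : Mᵀ = M := by
    rw [hMdef, transpose_sub, transpose_smul, transpose_one, hNdef]
    congr 2
    ext i j
    rw [transpose_apply, vecMulVec_apply, vecMulVec_apply, mul_comm]
  have hMmulVec : ∀ y : Fin (p+1) → ℝ,
      M.mulVec y = y - ((2/c) * (w ⬝ᵥ y)) • w := by
    intro y
    rw [hMdef, sub_mulVec, one_mulVec, smul_mulVec]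
    congr 1
    funext i
    rw [Pi.smul_apply, Pi.smul_apply, smul_eq_mul, smul_eq_mul]
    have hNy : (N *ᵥ y) i = ∑ j, (w i * w j) * y j := by
      rw [hNdef]
      simp [mulVec, dotProduct, vecMulVec_apply]
    rw [hNy, dotProduct, Finset.mul_sum, Finset.mul_sum, Finset.sum_mul]
    exact Finset.sum_congr rfl fun j _ => by ring
  have hNN : N * N = c • N := by
    ext i j
    rw [Matrix.mul_apply, Matrix.smul_apply, smul_eq_mul, hcdef, dotProduct, Finset.sum_mul]
    refine Finset.sum_congr rfl fun k _ => ?_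
    rw [hNdef, vecMulVec_apply, vecMulVec_apply, vecMulVec_apply]
    ring
  have hMM : M * M = 1 := by
    rw [hMdef]
    simp only [sub_mul, mul_sub, mul_one, one_mul, smul_mul_assoc, mul_smul_comm, hNN, smul_smul]
    have h4 : (2:ℝ)/c * c = 2 := by field_simp
    rw [h4]
    module
  have hwR : ∀ y : Fin (p+1) → ℝ, w ⬝ᵥ (M.mulVec y) = -(w ⬝ᵥ y) := by
    intro y
    rw [hMmulVec, dotProduct_sub, dotProduct_smul, smul_eq_mul, ← hcdef]
    field_simp
    ring
  have hFR : ∀ y : Fin (p+1) → ℝ, F (M.mulVec y) = F y := by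
    intro y
    have hAM : A.mulVec (M.mulVec y) = fun i => A.mulVec y i - (2/c) * (w ⬝ᵥ y) := by
      rw [hMmulVec, mulVec_sub, mulVec_smul, hAw]
      funext i
      simp
    have harg : (fun k : Fin p => A.mulVec (M.mulVec y) k.succ - A.mulVec (M.mulVec y) k.castSucc)
        = (fun k : Fin p => A.mulVec y k.succ - A.mulVec y k.castSucc) := by
      funext k
      rw [hAM]
      ring
    show ftil (fun k : Fin p => A.mulVec (M.mulVec y) k.succ - A.mulVec (M.mulVec y) k.castSucc)
        = ftil (fun k : Fin p => A.mulVec y k.succ - A.mulVec y k.castSucc)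
    rw [harg]
  have hmeasM : Measurable (fun y : Fin (p+1) → ℝ => M.mulVec y) := by
    have : (fun y : Fin (p+1) → ℝ => M.mulVec y) = ⇑(Matrix.toLin' M) := by
      funext y; rw [Matrix.toLin'_apply]
    rw [this]
    exact (LinearMap.continuous_of_finiteDimensional _).measurable
  have hdotmeas : Measurable (fun y : Fin (p+1) → ℝ => w ⬝ᵥ y) :=
    Finset.measurable_sum _ fun j _ => by fun_prop
  have hHmeas : Measurable (fun y : Fin (p+1) → ℝ => F y * (w ⬝ᵥ y)) :=
    hFmeas.mul hdotmeas
  have hI : ∫ y, F y * (w ⬝ᵥ y) ∂μ = - ∫ y, F y * (w ⬝ᵥ y) ∂μ := by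
    conv_lhs => rw [hμdef, ← map_gauss M hMM hMsymm]
    rw [integral_map hmeasM.aemeasurable hHmeas.aestronglyMeasurable]
    simp_rw [hFR, hwR, mul_neg]
    rw [integral_neg, ← hμdef]
  have hIzero : ∫ y, F y * (w ⬝ᵥ y) ∂μ = 0 := by linarith
  rw [hstep1, hstep2, hIzero]
end
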